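/- (Consistency of TVA) Define TVA_{n+1} = 0 and TVA_t = E[v_t · 1{v_t ≥ g_t}] + P(v_t < g_t) · TVA_{t+1}, where g_t = min{x ≥ 0 : E[max(v_t, x)] ≥ g_{t-1}}. If g_0 ≤ OPT_1 then TVA_t ≥ g_{t-1} for all t ∈ [n+1]; in particular TVA_1 ≥ g_0. -/

import Mathlib

open MeasureTheory ProbabilityTheory

lemma tva_key {Ω : Type*} [MeasureSpace Ω] [IsProbabilityMeasure (ℙ : Measure Ω)]
    (f : Ω → ℝ) (hf : Measurable f) (hfi : Integrable f) (c : ℝ) :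
    ∫ ω, max (f ω) c
      = (∫ ω, Set.indicator {ω | c ≤ f ω} f ω) + (ℙ {ω | f ω < c}).toReal * c := by
  have hs : MeasurableSet {ω | c ≤ f ω} := measurableSet_le measurable_const hf
  have hs' : MeasurableSet {ω | f ω < c} := measurableSet_lt hf measurable_const
  have heq : ∀ ω, max (f ω) c
      = Set.indicator {ω | c ≤ f ω} f ω + Set.indicator {ω | f ω < c} (fun _ => c) ω := by
    intro ω
    by_cases h : c ≤ f ω
    · simp [Set.indicator, h, not_lt.mpr h, max_eq_left h]
    · simp [Set.indicator, h, not_le.mp h, max_eq_right (le_of_not_ge h)]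
  calc ∫ ω, max (f ω) c
      = ∫ ω, (Set.indicator {ω | c ≤ f ω} f ω + Set.indicator {ω | f ω < c} (fun _ => c) ω) := by
        exact integral_congr_ae (Filter.Eventually.of_forall heq)
    _ = (∫ ω, Set.indicator {ω | c ≤ f ω} f ω) + ∫ ω, Set.indicator {ω | f ω < c} (fun _ => c) ω := by
        exact integral_add (hfi.indicator hs) ((integrable_const c).indicator hs')
    _ = (∫ ω, Set.indicator {ω | c ≤ f ω} f ω) + (ℙ {ω | f ω < c}).toReal * c := by
        rw [integral_indicator_const _ hs']; simp [smul_eq_mul, Measure.real]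

/-- Consistency of TVA: with `TVA (n+1) = 0`,
`TVA t = E[v t · 1{v t ≥ g t}] + P(v t < g t) · TVA (t+1)` and
`g t = min {x ≥ 0 : E[max (v t) x] ≥ g (t-1)}`, if `g 0 ≤ OPT 1` then
`TVA t ≥ g (t-1)` for all `t ∈ [n+1]`; in particular `TVA 1 ≥ g 0`. -/
theorem tva_consistency
    {Ω : Type*} [MeasureSpace Ω] [IsProbabilityMeasure (ℙ : Measure Ω)]
    (n : ℕ) (v : ℕ → Ω → ℝ)
    (hmeas : ∀ i, Measurable (v i))
    (hnn : ∀ i ω, 0 ≤ v i ω)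
    (hint : ∀ i, Integrable (v i))
    (hindep : iIndepFun v ℙ)
    (OPT : ℕ → ℝ)
    (hOPTlast : OPT (n + 1) = 0)
    (hOPTrec : ∀ t ∈ Finset.Icc 1 n, OPT t = ∫ ω, max (v t ω) (OPT (t + 1)))
    (g : ℕ → ℝ)
    (hg0nn : 0 ≤ g 0) (hg0 : g 0 ≤ OPT 1)
    (hgrec : ∀ t ∈ Finset.Icc 1 n,
      IsLeast {x : ℝ | 0 ≤ x ∧ g (t - 1) ≤ ∫ ω, max (v t ω) x} (g t))
    (TVA : ℕ → ℝ)
    (hTVAlast : TVA (n + 1) = 0)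
    (hTVArec : ∀ t ∈ Finset.Icc 1 n,
      TVA t = (∫ ω, Set.indicator {ω | g t ≤ v t ω} (v t) ω)
        + (ℙ {ω | v t ω < g t}).toReal * TVA (t + 1)) :
    (∀ t ∈ Finset.Icc 1 (n + 1), TVA t ≥ g (t - 1)) ∧ TVA 1 ≥ g 0 := by
  -- OPT is nonnegative on [1, n+1]
  have hOPTnn : ∀ t, 1 ≤ t → t ≤ n + 1 → 0 ≤ OPT t := by
    intro t h1 h2
    rcases eq_or_lt_of_le h2 with rfl | h
    · exact le_of_eq hOPTlast.symm
    · rw [hOPTrec t (Finset.mem_Icc.mpr ⟨h1, by omega⟩)]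
      exact integral_nonneg fun ω => le_max_of_le_left (hnn t ω)
  -- g t ≤ OPT (t+1) for all t ≤ n, by forward induction
  have hgOPT : ∀ t, t ≤ n → g t ≤ OPT (t + 1) := by
    intro t
    induction t with
    | zero => intro _; exact hg0
    | succ t ih =>
      intro ht
      have h1 : t + 1 ∈ Finset.Icc 1 n := Finset.mem_Icc.mpr ⟨by omega, ht⟩
      have hm : OPT (t + 2) ∈ {x : ℝ | 0 ≤ x ∧ g ((t + 1) - 1) ≤ ∫ ω, max (v (t + 1) ω) x} := by
        refine ⟨hOPTnn (t + 2) (by omega) (by omega), ?_⟩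
        have h2 : g t ≤ OPT (t + 1) := ih (by omega)
        rw [hOPTrec (t + 1) h1] at h2
        simpa using h2
      exact (hgrec (t + 1) h1).2 hm
  -- main downward induction
  have main : ∀ j, j ≤ n → g (n - j) ≤ TVA (n + 1 - j) := by
    intro j
    induction j with
    | zero =>
      intro _
      have h0 : g n ≤ 0 := hOPTlast ▸ hgOPT n le_rfl
      simpa [hTVAlast] using h0
    | succ j ih =>
      intro hj
      have ht1 : 1 ≤ n - j := by omega
      have e1 : n - (j + 1) = (n - j) - 1 := by omega
      have e2 : n + 1 - (j + 1) = n - j := by omega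
      have e3 : n + 1 - j = (n - j) + 1 := by omega
      rw [e1, e2]
      set t := n - j with htdef
      have hIH : g t ≤ TVA (t + 1) := by
        have := ih (by omega)
        rwa [e3] at this
      have htmem : t ∈ Finset.Icc 1 n := Finset.mem_Icc.mpr ⟨ht1, by omega⟩
      have hgt := hgrec t htmem
      have hgt0 : 0 ≤ g t := hgt.1.1
      have hgle : g (t - 1) ≤ ∫ ω, max (v t ω) (g t) := hgt.1.2
      have hkey := tva_key (v t) (hmeas t) (hint t) (g t)
      have hP : (0 : ℝ) ≤ (ℙ {ω | v t ω < g t}).toReal := ENNReal.toReal_nonneg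
      have hstep : TVA t ≥ (∫ ω, Set.indicator {ω | g t ≤ v t ω} (v t) ω)
          + (ℙ {ω | v t ω < g t}).toReal * g t := by
        rw [hTVArec t htmem]
        have := mul_le_mul_of_nonneg_left hIH hP
        linarith
      calc g (t - 1) ≤ ∫ ω, max (v t ω) (g t) := hgle
        _ = (∫ ω, Set.indicator {ω | g t ≤ v t ω} (v t) ω)
            + (ℙ {ω | v t ω < g t}).toReal * g t := hkey
        _ ≤ TVA t := hstep
  have hall : ∀ t ∈ Finset.Icc 1 (n + 1), TVA t ≥ g (t - 1) := by
    intro t ht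
    rw [Finset.mem_Icc] at ht
    have h := main (n + 1 - t) (by omega)
    have e1 : n - (n + 1 - t) = t - 1 := by omega
    have e2 : n + 1 - (n + 1 - t) = t := by omega
    rw [e1, e2] at h
    exact h
  exact ⟨hall, by simpa using hall 1 (Finset.mem_Icc.mpr ⟨le_rfl, by omega⟩)⟩
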